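/- Let D ⊂ ℝ be a nonempty open interval and U : D → ℝ three times continuously differentiable with U'(W) > 0 and U''(W) < 0 for all W ∈ D, and let α : (0,1) × D → (0,∞). Suppose that for every p ∈ (0,1), W ∈ D, and μ ∈ (0,1) such that, with x = (logit(μ) − logit(p))/α(p,W), both W + (1−p)x ∈ D and W − p x ∈ D, the first-order condition μ(1−p)·U'(W + (1−p)x) = (1−μ)p·U'(W − p x) holds. Then there exist constants α₀ > 0, a ∈ ℝ, and b > 0 such that U(W) = a − b·exp(−α₀ W) for all W ∈ D, and α(p,W) = α₀ for all (p,W) ∈ (0,1) × D. -/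

import Mathlib

open Real

noncomputable def logit (q : ℝ) : ℝ := Real.log (q / (1 - q))

/-- zero derivative on an open interval implies constant -/
lemma const_on_Ioo {f : ℝ → ℝ} {a b : ℝ}
    (h : ∀ x ∈ Set.Ioo a b, HasDerivAt f 0 x) :
    ∀ x ∈ Set.Ioo a b, ∀ y ∈ Set.Ioo a b, f x = f y := by
  have key : ∀ x ∈ Set.Ioo a b, ∀ y ∈ Set.Ioo a b, x ≤ y → f y = f x := by
    intro x hx y hy hxy
    have hsub : Set.Icc x y ⊆ Set.Ioo a b := Set.Icc_subset_Ioo hx.1 hy.2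
    exact constant_of_has_deriv_right_zero
      (fun z hz => (h z (hsub hz)).continuousAt.continuousWithinAt)
      (fun z hz => (h z (hsub (Set.Ico_subset_Icc_self hz))).hasDerivWithinAt)
      y (Set.right_mem_Icc.2 hxy)
  intro x hx y hy
  rcases le_total x y with hxy | hxy
  · exact (key x hx y hy hxy).symm
  · exact key y hy x hx hxy

/-- CARA is the unique smooth concave utility whose binary-asset demand
is linear in the log-odds gap. If `U` is C³ on an open interval with `U' > 0`, `U'' < 0`,
and `x = (logit μ − logit p)/α(p,W)` satisfies the first-order condition whenever both
terminal wealths stay in the domain, then `U(W) = a − b·exp(−α₀W)` with `α(p,W) ≡ α₀`. -/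
theorem cara_uniqueness_logodds_linear_demand
    (a b : ℝ) (hab : a < b) (U : ℝ → ℝ)
    (hU : ContDiffOn ℝ 3 U (Set.Ioo a b))
    (hU' : ∀ W ∈ Set.Ioo a b, 0 < deriv U W)
    (hU'' : ∀ W ∈ Set.Ioo a b, deriv (deriv U) W < 0)
    (α : ℝ → ℝ → ℝ)
    (hαpos : ∀ p ∈ Set.Ioo (0:ℝ) 1, ∀ W ∈ Set.Ioo a b, 0 < α p W)
    (hFOC : ∀ p ∈ Set.Ioo (0:ℝ) 1, ∀ W ∈ Set.Ioo a b, ∀ μ ∈ Set.Ioo (0:ℝ) 1,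
      W + (1 - p) * ((logit μ - logit p) / α p W) ∈ Set.Ioo a b →
      W - p * ((logit μ - logit p) / α p W) ∈ Set.Ioo a b →
      μ * (1 - p) * deriv U (W + (1 - p) * ((logit μ - logit p) / α p W))
        = (1 - μ) * p * deriv U (W - p * ((logit μ - logit p) / α p W))) :
    ∃ α₀ : ℝ, 0 < α₀ ∧ ∃ a₀ : ℝ, ∃ b₀ : ℝ, 0 < b₀ ∧
      (∀ W ∈ Set.Ioo a b, U W = a₀ - b₀ * Real.exp (-α₀ * W)) ∧
      (∀ p ∈ Set.Ioo (0:ℝ) 1, ∀ W ∈ Set.Ioo a b, α p W = α₀) := by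
  have hs : IsOpen (Set.Ioo a b) := isOpen_Ioo
  set U1 := deriv U with hU1def
  set U2 := deriv U1 with hU2def
  set U3 := deriv U2 with hU3def
  -- differentiability facts
  have hU1c : ContDiffOn ℝ 2 U1 (Set.Ioo a b) := hU.deriv_of_isOpen hs (by norm_num)
  have hU2c : ContDiffOn ℝ 1 U2 (Set.Ioo a b) := hU1c.deriv_of_isOpen hs (by norm_num)
  have hdU : ∀ x ∈ Set.Ioo a b, HasDerivAt U (U1 x) x := by
    intro x hx
    exact ((hU.differentiableOn (by norm_num)).differentiableAt (hs.mem_nhds hx)).hasDerivAt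
  have hdU1 : ∀ x ∈ Set.Ioo a b, HasDerivAt U1 (U2 x) x := by
    intro x hx
    exact ((hU1c.differentiableOn (by norm_num)).differentiableAt (hs.mem_nhds hx)).hasDerivAt
  have hdU2 : ∀ x ∈ Set.Ioo a b, HasDerivAt U2 (U3 x) x := by
    intro x hx
    exact ((hU2c.differentiableOn (by norm_num)).differentiableAt (hs.mem_nhds hx)).hasDerivAt
  -- key eventual identity from the FOC
  have hkey : ∀ p ∈ Set.Ioo (0:ℝ) 1, ∀ W ∈ Set.Ioo a b, ∀ t : ℝ,
      W + (1 - p) * (t / α p W) ∈ Set.Ioo a b →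
      W - p * (t / α p W) ∈ Set.Ioo a b →
      Real.exp t * U1 (W + (1 - p) * (t / α p W)) = U1 (W - p * (t / α p W)) := by
    intro p hp W hW t h1 h2
    set E := Real.exp (logit p + t) with hE
    have hEpos : 0 < E := Real.exp_pos _
    set μ := E / (1 + E) with hμdef
    have hμ : μ ∈ Set.Ioo (0:ℝ) 1 := by
      constructor
      · positivity
      · rw [hμdef, div_lt_one (by linarith)]; linarith
    have h1μ : 1 - μ = 1 / (1 + E) := by
      rw [hμdef]; field_simp; ring
    have hlogμ : logit μ = logit p + t := by
      show Real.log (μ / (1 - μ)) = logit p + t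
      rw [h1μ, hμdef]
      have h3 : E / (1 + E) / (1 / (1 + E)) = E := by field_simp
      rw [h3, hE, Real.log_exp]
    have ht : logit μ - logit p = t := by rw [hlogμ]; ring
    have hfoc := hFOC p hp W hW μ hμ (by rw [ht]; exact h1) (by rw [ht]; exact h2)
    rw [ht] at hfoc
    have hexp_logit : Real.exp (logit p) = p / (1 - p) :=
      Real.exp_log (div_pos hp.1 (by linarith [hp.2]))
    have hcoef : μ * (1 - p) = (1 - μ) * p * Real.exp t := by
      have hEval : E = p / (1 - p) * Real.exp t := by rw [hE, Real.exp_add, hexp_logit]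
      rw [hμdef, h1μ, hEval]
      have h1p : (1:ℝ) - p ≠ 0 := by intro h; linarith [hp.2]
      field_simp
    have hne : (1 - μ) * p ≠ 0 :=
      mul_ne_zero (by have := hμ.2; intro h; linarith) (ne_of_gt hp.1)
    apply mul_left_cancel₀ hne
    rw [hcoef] at hfoc
    linear_combination hfoc
  -- differentiate the key identity once and twice at t = 0
  have hmain : ∀ p ∈ Set.Ioo (0:ℝ) 1, ∀ W ∈ Set.Ioo a b,
      (U1 W + (α p W)⁻¹ * U2 W = 0) ∧
      (U1 W + 2*(1-p)*(α p W)⁻¹*U2 W + (1-p)^2*((α p W)⁻¹)^2*U3 W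
        = p^2*((α p W)⁻¹)^2*U3 W) := by
    intro p hp W hW
    set c := (α p W)⁻¹ with hcdef
    have hαp := hαpos p hp W hW
    have hcα : ∀ t : ℝ, t / α p W = c * t := fun t => by
      rw [hcdef, div_eq_mul_inv, mul_comm]
    set f : ℝ → ℝ := fun t => W + (1 - p) * (t / α p W) with hfdef
    set g : ℝ → ℝ := fun t => W - p * (t / α p W) with hgdef
    have hfc : Continuous f := by
      apply continuous_const.add (continuous_const.mul _)
      exact continuous_id.div_const _
    have hgc : Continuous g := by
      apply continuous_const.sub (continuous_const.mul _)
      exact continuous_id.div_const _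
    set N : Set ℝ := f ⁻¹' (Set.Ioo a b) ∩ g ⁻¹' (Set.Ioo a b) with hNdef
    have hNopen : IsOpen N := (hs.preimage hfc).inter (hs.preimage hgc)
    have hf0 : f 0 = W := by simp [hfdef]
    have hg0 : g 0 = W := by simp [hgdef]
    have h0N : (0:ℝ) ∈ N := by
      constructor <;> simp only [Set.mem_preimage, hf0, hg0] <;> exact hW
    have hN : N ∈ nhds (0:ℝ) := hNopen.mem_nhds h0N
    have hfd : ∀ t : ℝ, HasDerivAt f ((1 - p) * c) t := by
      intro t
      have h := (((hasDerivAt_id t).div_const (α p W)).const_mul (1 - p)).const_add W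
      rw [hcdef, ← one_div]
      exact h
    have hgd : ∀ t : ℝ, HasDerivAt g (-(p * c)) t := by
      intro t
      have h := (((hasDerivAt_id t).div_const (α p W)).const_mul p).const_sub W
      rw [hcdef, ← one_div]
      exact h
    -- first-order derivative comparison, at every t ∈ N
    have D1 : ∀ t ∈ N, Real.exp t * U1 (f t) + Real.exp t * (U2 (f t) * ((1 - p) * c))
        = U2 (g t) * (-(p * c)) := by
      intro t htN
      have hF : HasDerivAt (fun u => Real.exp u * U1 (f u))
          (Real.exp t * U1 (f t) + Real.exp t * (U2 (f t) * ((1 - p) * c))) t :=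
        (Real.hasDerivAt_exp t).mul ((hdU1 (f t) htN.1).comp t (hfd t))
      have hG : HasDerivAt (fun u => U1 (g u)) (U2 (g t) * (-(p * c))) t :=
        (hdU1 (g t) htN.2).comp t (hgd t)
      have hEq : (fun u => Real.exp u * U1 (f u)) =ᶠ[nhds t] (fun u => U1 (g u)) := by
        filter_upwards [hNopen.mem_nhds htN] with u hu
        exact hkey p hp W hW u hu.1 hu.2
      exact (hF.congr_of_eventuallyEq hEq.symm).unique hG
    -- value at 0
    have e1 : U1 W + c * U2 W = 0 := by
      have h := D1 0 h0N
      rw [hf0, hg0, Real.exp_zero] at h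
      linear_combination h
    refine ⟨e1, ?_⟩
    -- second-order: differentiate D1 at 0
    have hF1 : HasDerivAt (fun t => Real.exp t * U1 (f t) + Real.exp t * (U2 (f t) * ((1 - p) * c)))
        ((Real.exp 0 * U1 (f 0) + Real.exp 0 * (U2 (f 0) * ((1 - p) * c)))
          + (Real.exp 0 * (U2 (f 0) * ((1 - p) * c))
            + Real.exp 0 * ((U3 (f 0) * ((1 - p) * c)) * ((1 - p) * c)))) 0 := by
      exact ((Real.hasDerivAt_exp 0).mul ((hdU1 (f 0) (by rw [hf0]; exact hW)).comp 0 (hfd 0))).add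
        ((Real.hasDerivAt_exp 0).mul
          ((((hdU2 (f 0) (by rw [hf0]; exact hW)).comp 0 (hfd 0))).mul_const ((1 - p) * c)))
    have hG1 : HasDerivAt (fun t => U2 (g t) * (-(p * c)))
        ((U3 (g 0) * (-(p * c))) * (-(p * c))) 0 :=
      (((hdU2 (g 0) (by rw [hg0]; exact hW)).comp 0 (hgd 0))).mul_const (-(p * c))
    have hEq1 : (fun t => Real.exp t * U1 (f t) + Real.exp t * (U2 (f t) * ((1 - p) * c)))
        =ᶠ[nhds 0] (fun t => U2 (g t) * (-(p * c))) := by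
      filter_upwards [hN] with t ht
      exact D1 t ht
    have e2raw := (hF1.congr_of_eventuallyEq hEq1.symm).unique hG1
    rw [hf0, hg0, Real.exp_zero] at e2raw
    linear_combination e2raw
  -- α p W = -U2 W / U1 W, independent of p ; and U3 * U1 = U2^2
  have hα_eq : ∀ p ∈ Set.Ioo (0:ℝ) 1, ∀ W ∈ Set.Ioo a b, α p W * U1 W = -U2 W := by
    intro p hp W hW
    have e1 := (hmain p hp W hW).1
    have hαp := hαpos p hp W hW
    have hne : α p W ≠ 0 := ne_of_gt hαp
    field_simp at e1
    linarith [e1]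
  have hp3 : (1/3 : ℝ) ∈ Set.Ioo (0:ℝ) 1 := by norm_num
  have hU3U1 : ∀ W ∈ Set.Ioo a b, U3 W * U1 W = U2 W ^ 2 := by
    intro W hW
    obtain ⟨e1, e2⟩ := hmain (1/3) hp3 W hW
    set c := (α (1/3) W)⁻¹ with hcdef
    have hc : c ≠ 0 := inv_ne_zero (ne_of_gt (hαpos _ hp3 W hW))
    have h3 : c^2 * U3 W = U1 W := by linear_combination 3*e2 - 4*e1
    have h4 : c^2 * (U3 W * U1 W) = c^2 * (U2 W ^ 2) := by
      linear_combination U1 W * h3 + (U1 W - c * U2 W) * e1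
    exact mul_left_cancel₀ (pow_ne_zero 2 hc) h4
  -- A := -U2/U1 has zero derivative
  set A : ℝ → ℝ := fun W => -U2 W / U1 W with hAdef
  have hdA : ∀ W ∈ Set.Ioo a b, HasDerivAt A 0 W := by
    intro W hW
    have hU1ne : U1 W ≠ 0 := ne_of_gt (hU' W hW)
    have h := ((hdU2 W hW).neg).div (hdU1 W hW) hU1ne
    have hz : (-U3 W * U1 W - -U2 W * U2 W) / U1 W ^ 2 = 0 := by
      have : -U3 W * U1 W - -U2 W * U2 W = 0 := by linear_combination -(hU3U1 W hW)
      rw [this, zero_div]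
    simp only [Pi.neg_apply] at h
    rwa [hz] at h
  -- pick base point
  set W₀ := (a + b) / 2 with hW₀def
  have hW₀ : W₀ ∈ Set.Ioo a b := ⟨by linarith, by linarith⟩
  set α₀ := A W₀ with hα₀def
  have hα₀pos : 0 < α₀ := by
    rw [hα₀def, hAdef]
    exact div_pos (by linarith [hU'' W₀ hW₀]) (hU' W₀ hW₀)
  have hAconst : ∀ W ∈ Set.Ioo a b, A W = α₀ := fun W hW =>
    const_on_Ioo hdA W hW W₀ hW₀
  have hU2eq : ∀ W ∈ Set.Ioo a b, U2 W = -α₀ * U1 W := by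
    intro W hW
    have h := hAconst W hW
    have hU1ne : U1 W ≠ 0 := ne_of_gt (hU' W hW)
    rw [hAdef] at h
    field_simp at h
    linarith [h]
  -- U1 W = C exp(-α₀ W)
  set C := U1 W₀ * Real.exp (α₀ * W₀) with hCdef
  have hCpos : 0 < C := mul_pos (hU' W₀ hW₀) (Real.exp_pos _)
  have hdφ : ∀ W ∈ Set.Ioo a b, HasDerivAt (fun W => U1 W * Real.exp (α₀ * W)) 0 W := by
    intro W hW
    have hlin : HasDerivAt (fun W : ℝ => α₀ * W) α₀ W := by
      simpa using (hasDerivAt_id W).const_mul α₀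
    have hexp : HasDerivAt (fun W => Real.exp (α₀ * W)) (Real.exp (α₀ * W) * α₀) W := hlin.exp
    have h := (hdU1 W hW).mul hexp
    have hz : U2 W * Real.exp (α₀ * W) + U1 W * (Real.exp (α₀ * W) * α₀) = 0 := by
      rw [hU2eq W hW]; ring
    rwa [hz] at h
  have hU1val : ∀ W ∈ Set.Ioo a b, U1 W = C * Real.exp (-(α₀ * W)) := by
    intro W hW
    have h : U1 W * Real.exp (α₀ * W) = C := const_on_Ioo hdφ W hW W₀ hW₀
    have hexpne : Real.exp (α₀ * W) ≠ 0 := Real.exp_ne_zero _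
    rw [Real.exp_neg]
    field_simp
    linarith [h]
  -- integrate
  set b₀ := C / α₀ with hb₀def
  have hb₀pos : 0 < b₀ := div_pos hCpos hα₀pos
  have hdψ : ∀ W ∈ Set.Ioo a b, HasDerivAt (fun W => U W + b₀ * Real.exp (-(α₀ * W))) 0 W := by
    intro W hW
    have hexp : HasDerivAt (fun W => Real.exp (-(α₀ * W))) (Real.exp (-(α₀ * W)) * (-α₀)) W := by
      have h1 : HasDerivAt (fun W : ℝ => -(α₀ * W)) (-α₀) W := by
        have h := ((hasDerivAt_id W).const_mul α₀).neg; rw [mul_one] at h; exact h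
      exact h1.exp
    have h := (hdU W hW).add ((hexp.const_mul b₀))
    have hz : U1 W + b₀ * (Real.exp (-(α₀ * W)) * (-α₀)) = 0 := by
      rw [hU1val W hW, hb₀def]
      field_simp
      ring
    rwa [hz] at h
  set a₀ := U W₀ + b₀ * Real.exp (-(α₀ * W₀)) with ha₀def
  refine ⟨α₀, hα₀pos, a₀, b₀, hb₀pos, ?_, ?_⟩
  · intro W hW
    have h : U W + b₀ * Real.exp (-(α₀ * W)) = a₀ := const_on_Ioo hdψ W hW W₀ hW₀
    have : Real.exp (-α₀ * W) = Real.exp (-(α₀ * W)) := by ring_nf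
    rw [this]
    linarith [h]
  · intro p hp W hW
    have h := hα_eq p hp W hW
    have hU1ne : U1 W ≠ 0 := ne_of_gt (hU' W hW)
    have h2 := hU2eq W hW
    have : α p W * U1 W = α₀ * U1 W := by rw [h, h2]; ring
    exact mul_right_cancel₀ hU1ne this
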